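/- Forward time-average of the logistic solution (Lemma 3.2, equation (3.6), pathwise form): Let w : [0,∞) → ℝ be continuous with w(0) = 0 and w(t)/t → 0 as t → ∞, and let x > 0. Define g(t) := x·exp(rt + σ·w(t)) / (1 + r·x·∫₀ᵗ exp(rs + σ·w(s)) ds). Then (1/t)·∫₀ᵗ g(s) ds → 1 as t → ∞. Equivalently, (1/(r·t))·log(1 + r·x·∫₀ᵗ exp(rs + σ·w(s)) ds) → 1 as t → ∞. -/

import Mathlib

open Real Filter Topology intervalIntegral

private lemma phi_contOn (r σ : ℝ) (w : ℝ → ℝ) (hw : ContinuousOn w (Set.Ici 0)) :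
    ContinuousOn (fun s => Real.exp (r * s + σ * w s)) (Set.Ici 0) :=
  Real.continuous_exp.comp_continuousOn
    (((continuous_const.mul continuous_id).continuousOn).add (continuousOn_const.mul hw))

private lemma phi_intble (r σ : ℝ) (w : ℝ → ℝ) (hw : ContinuousOn w (Set.Ici 0))
    {a b : ℝ} (ha : 0 ≤ a) (hab : a ≤ b) :
    IntervalIntegrable (fun s => Real.exp (r * s + σ * w s)) MeasureTheory.volume a b := by
  apply ((phi_contOn r σ w hw).mono ?_).intervalIntegrable
  rw [Set.uIcc_of_le hab]
  exact fun u hu => le_trans ha hu.1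

private lemma int_nonneg (r σ : ℝ) (w : ℝ → ℝ) {t : ℝ} (ht : 0 ≤ t) :
    0 ≤ ∫ s in (0:ℝ)..t, Real.exp (r * s + σ * w s) :=
  intervalIntegral.integral_nonneg ht (fun u _ => (Real.exp_pos _).le)

private lemma F_pos (r σ x : ℝ) (hr : 0 < r) (hx : 0 < x) (w : ℝ → ℝ) {t : ℝ} (ht : 0 ≤ t) :
    0 < 1 + r * x * ∫ s in (0:ℝ)..t, Real.exp (r * s + σ * w s) := by
  have h1 := int_nonneg r σ w ht
  nlinarith [mul_nonneg (mul_nonneg hr.le hx.le) h1]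

/-- The slow-growth hypothesis gives a threshold beyond which `|σ w s| ≤ ε s`. -/
private lemma exists_threshold (σ : ℝ) (w : ℝ → ℝ)
    (hwslow : Tendsto (fun t => w t / t) atTop (𝓝 0)) {ε : ℝ} (hε : 0 < ε) :
    ∃ T : ℝ, 1 ≤ T ∧ ∀ s, T ≤ s → |σ * w s| ≤ ε * s := by
  have hσw : Tendsto (fun t => σ * (w t / t)) atTop (𝓝 (σ * 0)) := hwslow.const_mul σ
  rw [mul_zero] at hσw
  have hball : {y : ℝ | |y| < ε} ∈ 𝓝 (0:ℝ) := by
    have := Metric.ball_mem_nhds (0:ℝ) hε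
    simpa [Metric.ball, Real.dist_eq] using this
  obtain ⟨T₀, hT₀⟩ := (eventually_atTop.1 ((hσw.eventually hball).and (eventually_ge_atTop 1)))
  refine ⟨max T₀ 1, le_max_right _ _, fun s hs => ?_⟩
  obtain ⟨h1, h2⟩ := hT₀ s (le_trans (le_max_left _ _) hs)
  have hs0 : (0:ℝ) < s := lt_of_lt_of_le one_pos h2
  have he : |σ * w s / s| < ε := by rw [mul_div_assoc]; exact h1
  have heq : |σ * w s| = |σ * w s / s| * s := by
    rw [abs_div, abs_of_pos hs0]
    field_simp
  rw [heq]
  exact mul_le_mul_of_nonneg_right he.le hs0.le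

/-- Main asymptotics: `log F(t) / t → r`. -/
private lemma logF_div_tendsto (r σ x : ℝ) (hr : 0 < r) (hx : 0 < x)
    (w : ℝ → ℝ) (hw : ContinuousOn w (Set.Ici 0))
    (hwslow : Tendsto (fun t => w t / t) atTop (𝓝 0)) :
    Tendsto (fun t : ℝ =>
      Real.log (1 + r * x * ∫ s in (0:ℝ)..t, Real.exp (r * s + σ * w s)) / t)
      atTop (𝓝 r) := by
  rw [tendsto_order]
  constructor
  · -- lower bound
    intro a ha
    set ε : ℝ := min ((r - a) / 2) (r / 2) with hεdef
    have hε : 0 < ε := lt_min (by linarith) (by linarith)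
    have hεa : a < r - ε := by
      have := min_le_left ((r - a) / 2) (r / 2); simp only [← hεdef] at this; linarith
    have hεr : 0 < r - ε := by
      have := min_le_right ((r - a) / 2) (r / 2); simp only [← hεdef] at this; linarith
    obtain ⟨T, hT1, hT⟩ := exists_threshold σ w hwslow hε
    have htend : Tendsto (fun t : ℝ => ((r - ε) * (t - 1) + Real.log (r * x)) / t)
        atTop (𝓝 (r - ε)) := by
      have h0 : Tendsto (fun t : ℝ => (r - ε) + (Real.log (r * x) - (r - ε)) / t)
          atTop (𝓝 ((r - ε) + 0)) :=
        tendsto_const_nhds.add (tendsto_const_nhds.div_atTop tendsto_id)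
      rw [add_zero] at h0
      apply h0.congr'
      filter_upwards [eventually_gt_atTop 0] with t ht
      field_simp
      ring
    filter_upwards [eventually_ge_atTop (T + 1), htend.eventually (lt_mem_nhds hεa)]
      with t ht1 ht2
    have ht0 : (0:ℝ) < t := by linarith
    have htm1 : (0:ℝ) ≤ t - 1 := by linarith
    -- pointwise lower bound on [t-1, t]
    have h1 : Real.exp ((r - ε) * (t - 1)) ≤ ∫ s in (t-1)..t, Real.exp (r * s + σ * w s) := by
      calc Real.exp ((r - ε) * (t - 1))
          = ∫ _s in (t-1)..t, Real.exp ((r - ε) * (t - 1)) := by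
            rw [intervalIntegral.integral_const, smul_eq_mul]; ring_nf
      _ ≤ ∫ s in (t-1)..t, Real.exp (r * s + σ * w s) := by
          apply intervalIntegral.integral_mono_on (by linarith) intervalIntegrable_const
            (phi_intble r σ w hw htm1 (by linarith))
          intro s hs
          have hsT : T ≤ s := le_trans (by linarith) hs.1
          have hσs := hT s hsT
          have habs : -(ε * s) ≤ σ * w s := neg_le_of_neg_le (le_trans (neg_le_abs _) hσs)
          apply Real.exp_le_exp.2
          nlinarith [hs.1, hs.2]
    have h2 : ∫ s in (t-1)..t, Real.exp (r * s + σ * w s)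
        ≤ ∫ s in (0:ℝ)..t, Real.exp (r * s + σ * w s) := by
      rw [← intervalIntegral.integral_add_adjacent_intervals
        (phi_intble r σ w hw le_rfl htm1) (phi_intble r σ w hw htm1 (by linarith))]
      have := int_nonneg r σ w htm1
      linarith
    have h3 : r * x * Real.exp ((r - ε) * (t - 1))
        ≤ 1 + r * x * ∫ s in (0:ℝ)..t, Real.exp (r * s + σ * w s) := by
      nlinarith [mul_pos hr hx]
    have h4 : (r - ε) * (t - 1) + Real.log (r * x)
        ≤ Real.log (1 + r * x * ∫ s in (0:ℝ)..t, Real.exp (r * s + σ * w s)) := by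
      have := Real.log_le_log (by positivity) h3
      rwa [Real.log_mul (by positivity) (Real.exp_ne_zero _), Real.log_exp, add_comm] at this
    calc a < ((r - ε) * (t - 1) + Real.log (r * x)) / t := ht2
    _ ≤ _ := by gcongr
  · -- upper bound
    intro a ha
    set ε : ℝ := (a - r) / 2 with hεdef
    have hε : 0 < ε := by simp [hεdef]; linarith
    have hεa : r + ε < a := by simp [hεdef]; linarith
    obtain ⟨T, hT1, hT⟩ := exists_threshold σ w hwslow hε
    set C : ℝ := ∫ s in (0:ℝ)..T, Real.exp (r * s + σ * w s) with hCdef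
    have hC : 0 ≤ C := int_nonneg r σ w (by linarith)
    set D : ℝ := 1 + r * x * C + r * x with hDdef
    have hD : 1 ≤ D := by nlinarith [mul_pos hr hx]
    have htend : Tendsto (fun t : ℝ => (Real.log D + Real.log t + (r + ε) * t) / t)
        atTop (𝓝 (r + ε)) := by
      have h0 : Tendsto (fun t : ℝ => Real.log D / t + Real.log t / t + (r + ε))
          atTop (𝓝 (0 + 0 + (r + ε))) :=
        ((tendsto_const_nhds.div_atTop tendsto_id).add
          Real.isLittleO_log_id_atTop.tendsto_div_nhds_zero).add tendsto_const_nhds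
      rw [zero_add, zero_add] at h0
      apply h0.congr'
      filter_upwards [eventually_gt_atTop 0] with t ht
      field_simp
    filter_upwards [eventually_ge_atTop (T + 1), htend.eventually (gt_mem_nhds hεa)]
      with t ht1 ht2
    have ht0 : (0:ℝ) < t := by linarith
    have hTt : T ≤ t := by linarith
    have hrε : (0:ℝ) < r + ε := by linarith
    have h1 : ∫ s in T..t, Real.exp (r * s + σ * w s)
        ≤ (t - T) * Real.exp ((r + ε) * t) := by
      calc ∫ s in T..t, Real.exp (r * s + σ * w s)
          ≤ ∫ _s in T..t, Real.exp ((r + ε) * t) := by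
            apply intervalIntegral.integral_mono_on hTt
              (phi_intble r σ w hw (by linarith) hTt) intervalIntegrable_const
            intro s hs
            have hσs := hT s hs.1
            have habs : σ * w s ≤ ε * s := le_trans (le_abs_self _) hσs
            apply Real.exp_le_exp.2
            nlinarith [hs.1, hs.2]
      _ = (t - T) * Real.exp ((r + ε) * t) := by
            rw [intervalIntegral.integral_const, smul_eq_mul]
    have h2 : ∫ s in (0:ℝ)..t, Real.exp (r * s + σ * w s)
        ≤ C + (t - T) * Real.exp ((r + ε) * t) := by
      rw [← intervalIntegral.integral_add_adjacent_intervals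
        (phi_intble r σ w hw le_rfl (by linarith)) (phi_intble r σ w hw (by linarith) hTt)]
      rw [hCdef]
      linarith
    have hte : 1 ≤ t * Real.exp ((r + ε) * t) := by
      have h1t : (1:ℝ) ≤ t := by linarith
      have := Real.one_le_exp (by positivity : (0:ℝ) ≤ (r + ε) * t)
      nlinarith
    have h3 : 1 + r * x * ∫ s in (0:ℝ)..t, Real.exp (r * s + σ * w s)
        ≤ D * (t * Real.exp ((r + ε) * t)) := by
      have hexp : (0:ℝ) < Real.exp ((r + ε) * t) := Real.exp_pos _
      have hrx : 0 < r * x := mul_pos hr hx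
      have hTt' : t - T ≤ t := by linarith
      have hstep : ∫ s in (0:ℝ)..t, Real.exp (r * s + σ * w s)
          ≤ C + t * Real.exp ((r + ε) * t) := by nlinarith
      rw [hDdef]
      nlinarith [mul_nonneg hrx.le hC]
    have h4 : Real.log (1 + r * x * ∫ s in (0:ℝ)..t, Real.exp (r * s + σ * w s))
        ≤ Real.log D + Real.log t + (r + ε) * t := by
      have hl := Real.log_le_log (F_pos r σ x hr hx w (by linarith)) h3
      rwa [Real.log_mul (by linarith) (by positivity), Real.log_mul (by linarith)
        (Real.exp_ne_zero _), Real.log_exp, ← add_assoc] at hl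
    calc Real.log (1 + r * x * ∫ s in (0:ℝ)..t, Real.exp (r * s + σ * w s)) / t
        ≤ (Real.log D + Real.log t + (r + ε) * t) / t := by gcongr
    _ < a := ht2

/-- FTC: the integral of `g` is `(1/r) log F(t)`. -/
private lemma integral_g_eq (r σ x : ℝ) (hr : 0 < r) (hx : 0 < x)
    (w : ℝ → ℝ) (hw : ContinuousOn w (Set.Ici 0))
    (g : ℝ → ℝ)
    (hg : ∀ t : ℝ, 0 ≤ t → g t =
      x * Real.exp (r * t + σ * w t) /
        (1 + r * x * ∫ s in (0:ℝ)..t, Real.exp (r * s + σ * w s)))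
    {t : ℝ} (ht : 0 ≤ t) :
    ∫ s in (0:ℝ)..t, g s =
      (1 / r) * Real.log (1 + r * x * ∫ s in (0:ℝ)..t, Real.exp (r * s + σ * w s)) := by
  set F : ℝ → ℝ := fun u => 1 + r * x * ∫ s in (0:ℝ)..u, Real.exp (r * s + σ * w s)
    with hFdef
  have hFposOn : ∀ u ∈ Set.Icc (0:ℝ) t, 0 < F u := fun u hu => F_pos r σ x hr hx w hu.1
  have hIcc : Set.Icc (0:ℝ) t ⊆ Set.Ici 0 := fun u hu => hu.1
  have hIOn : MeasureTheory.IntegrableOn (fun s => Real.exp (r * s + σ * w s))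
      (Set.uIcc (0:ℝ) t) MeasureTheory.volume := by
    rw [Set.uIcc_of_le ht]
    exact ((phi_contOn r σ w hw).mono hIcc).integrableOn_Icc
  have hFc : ContinuousOn F (Set.Icc 0 t) := by
    apply continuousOn_const.add (continuousOn_const.mul ?_)
    have := intervalIntegral.continuousOn_primitive_interval hIOn
    rwa [Set.uIcc_of_le ht] at this
  have hfc : ContinuousOn (fun u => (1 / r) * Real.log (F u)) (Set.Icc 0 t) :=
    continuousOn_const.mul (hFc.log (fun u hu => (hFposOn u hu).ne'))
  have hgc : ContinuousOn g (Set.Icc 0 t) := by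
    apply ContinuousOn.congr
      (f := fun s => x * Real.exp (r * s + σ * w s) / F s)
      (((continuousOn_const.mul ((phi_contOn r σ w hw).mono hIcc)).div hFc
        (fun u hu => (hFposOn u hu).ne')))
    intro s hs
    exact hg s hs.1
  have hgint : IntervalIntegrable g MeasureTheory.volume 0 t := by
    apply ContinuousOn.intervalIntegrable
    rwa [Set.uIcc_of_le ht]
  have hderiv : ∀ s ∈ Set.Ioo (0:ℝ) t,
      HasDerivWithinAt (fun u => (1 / r) * Real.log (F u)) (g s) (Set.Ioi s) s := by
    intro s hs
    have hs0 : (0:ℝ) < s := hs.1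
    have hci : ContinuousAt (fun s => Real.exp (r * s + σ * w s)) s :=
      (phi_contOn r σ w hw).continuousAt (Ici_mem_nhds hs0)
    have hmeas : StronglyMeasurableAtFilter (fun s => Real.exp (r * s + σ * w s))
        (𝓝 s) MeasureTheory.volume :=
      ContinuousOn.stronglyMeasurableAtFilter isOpen_Ioi
        ((phi_contOn r σ w hw).mono Set.Ioi_subset_Ici_self) s hs0
    have hI : HasDerivAt (fun u => ∫ s in (0:ℝ)..u, Real.exp (r * s + σ * w s))
        (Real.exp (r * s + σ * w s)) s :=
      intervalIntegral.integral_hasDerivAt_right (phi_intble r σ w hw le_rfl hs0.le) hmeas hci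
    have hF' : HasDerivAt F (r * x * Real.exp (r * s + σ * w s)) s :=
      (hI.const_mul (r * x)).const_add 1
    have hlog : HasDerivAt (fun u => Real.log (F u))
        (r * x * Real.exp (r * s + σ * w s) / F s) s :=
      hF'.log (F_pos r σ x hr hx w hs0.le).ne'
    have hf := hlog.const_mul (1 / r)
    have hFne : F s ≠ 0 := (hFposOn s ⟨hs0.le, hs.2.le⟩).ne'
    have heq : 1 / r * (r * x * Real.exp (r * s + σ * w s) / F s) = g s := by
      rw [hg s hs0.le]
      show 1 / r * (r * x * Real.exp (r * s + σ * w s) / F s) = x * Real.exp (r * s + σ * w s) / F s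
      field_simp
    rw [heq] at hf
    exact hf.hasDerivWithinAt
  have key := intervalIntegral.integral_eq_sub_of_hasDeriv_right_of_le ht hfc hderiv hgint
  rw [key, hFdef]
  simp [Real.log_one]

theorem logistic_forward_time_average
    (r σ x : ℝ) (hr : 0 < r) (hx : 0 < x)
    (w : ℝ → ℝ) (hw : ContinuousOn w (Set.Ici 0)) (hw0 : w 0 = 0)
    (hwslow : Tendsto (fun t => w t / t) atTop (𝓝 0))
    (g : ℝ → ℝ)
    (hg : ∀ t : ℝ, 0 ≤ t → g t =
      x * Real.exp (r * t + σ * w t) /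
        (1 + r * x * ∫ s in (0:ℝ)..t, Real.exp (r * s + σ * w s))) :
    Tendsto (fun t : ℝ => (1 / t) * ∫ s in (0:ℝ)..t, g s) atTop (𝓝 1) ∧
    Tendsto (fun t : ℝ => (1 / (r * t)) *
        Real.log (1 + r * x * ∫ s in (0:ℝ)..t, Real.exp (r * s + σ * w s)))
      atTop (𝓝 1) := by
  have hmain := logF_div_tendsto r σ x hr hx w hw hwslow
  have h2 : Tendsto (fun t : ℝ => (1 / (r * t)) *
      Real.log (1 + r * x * ∫ s in (0:ℝ)..t, Real.exp (r * s + σ * w s)))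
      atTop (𝓝 1) := by
    have hd : Tendsto (fun t : ℝ =>
        Real.log (1 + r * x * ∫ s in (0:ℝ)..t, Real.exp (r * s + σ * w s)) / t / r)
        atTop (𝓝 (r / r)) := hmain.div_const r
    rw [div_self hr.ne'] at hd
    apply hd.congr'
    filter_upwards [eventually_gt_atTop 0] with t ht
    ring
  refine ⟨?_, h2⟩
  apply h2.congr'
  filter_upwards [eventually_gt_atTop 0] with t ht
  rw [integral_g_eq r σ x hr hx w hw g hg ht.le]
  ring
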